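/- Let D be an integral domain that is not a field. Then the Zariski space Zar(D[X]) of the polynomial ring D[X] is not a Noetherian topological space. -/

import Mathlib

/-- The Zariski topology on the set of valuation subrings of a field `K`. -/
instance zariskiTopology (K : Type*) [Field K] : TopologicalSpace (ValuationSubring K) :=
  TopologicalSpace.generateFrom {U | ∃ x : K, U = {V : ValuationSubring K | x ∈ V}}

/-- The Zariski space `Zar(D)`: valuation subrings of `K` containing the image of `D`. -/
def zarSet (D K : Type*) [CommRing D] [Field K] [Algebra D K] : Set (ValuationSubring K) :=
  {V | ∀ d : D, algebraMap D K d ∈ V}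

/-! ### Auxiliary: Gauss valuations on polynomial rings -/

section Gauss

open Polynomial

variable {R : Type*} [CommRing R] {Γ : Type*} [LinearOrderedCommGroupWithZero Γ]

noncomputable local instance gaussOrderBot : OrderBot Γ where
  bot := 0
  bot_le _ := zero_le'

private lemma lt_of_mul_lt_mul_right₀' {a b c : Γ} (h : a * c < b * c) : a < b :=
  lt_of_not_ge fun hba => not_le_of_gt h (mul_le_mul_left hba c)

variable (u : Valuation R Γ) (c : Γ)

/-- The Gauss "sup" function on polynomials. -/
noncomputable def gaussFun (f : R[X]) : Γ :=
  f.support.sup fun i => u (f.coeff i) * c ^ i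

lemma term_le_gaussFun (f : R[X]) (i : ℕ) :
    u (f.coeff i) * c ^ i ≤ gaussFun u c f := by
  by_cases h : i ∈ f.support
  · show u (f.coeff i) * c ^ i ≤ f.support.sup fun j => u (f.coeff j) * c ^ j
    exact Finset.le_sup (f := fun j => u (f.coeff j) * c ^ j) (b := i) h
  · rw [Polynomial.notMem_support_iff.mp h, map_zero, zero_mul]
    exact zero_le'

lemma gaussFun_le {f : R[X]} {b : Γ} (h : ∀ i, u (f.coeff i) * c ^ i ≤ b) :
    gaussFun u c f ≤ b :=
  Finset.sup_le fun i _ => h i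

@[simp] lemma gaussFun_zero : gaussFun u c (0 : R[X]) = 0 := by
  simp only [gaussFun, Polynomial.support_zero, Finset.sup_empty]
  rfl

variable (hu : ∀ a : R, u a = 0 ↔ a = 0) (hc : c ≠ 0)

include hu hc in
lemma gaussFun_eq_zero_iff {f : R[X]} : gaussFun u c f = 0 ↔ f = 0 := by
  constructor
  · intro h
    by_contra hf
    obtain ⟨i, hi⟩ := Polynomial.nonempty_support_iff.mpr hf
    have h1 : u (f.coeff i) * c ^ i ≤ 0 := h ▸ term_le_gaussFun u c f i
    rw [le_zero_iff, mul_eq_zero] at h1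
    rcases h1 with h1 | h1
    · exact (Polynomial.mem_support_iff.mp hi) ((hu _).mp h1)
    · exact pow_ne_zero _ hc h1
  · rintro rfl; simp

include hu hc in
lemma exists_min_index {f : R[X]} (hf : f ≠ 0) :
    ∃ i0, u (f.coeff i0) * c ^ i0 = gaussFun u c f ∧
      ∀ i < i0, u (f.coeff i) * c ^ i < gaussFun u c f := by
  obtain ⟨i, hi, hieq⟩ := Finset.exists_mem_eq_sup f.support
    (Polynomial.nonempty_support_iff.mpr hf) fun i => u (f.coeff i) * c ^ i
  set M := gaussFun u c f with hM
  have hMne : M ≠ 0 := fun h => hf ((gaussFun_eq_zero_iff u c hu hc).mp h)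
  set t : Finset ℕ := f.support.filter fun j => u (f.coeff j) * c ^ j = M with ht
  have htne : t.Nonempty := ⟨i, Finset.mem_filter.mpr ⟨hi, hieq.symm⟩⟩
  refine ⟨t.min' htne, (Finset.mem_filter.mp (t.min'_mem htne)).2, fun j hj => ?_⟩
  by_cases hjz : f.coeff j = 0
  · rw [hjz]
    simpa using zero_lt_iff.mpr hMne
  · refine lt_of_le_of_ne (term_le_gaussFun u c f j) fun he => ?_
    have : j ∈ t := Finset.mem_filter.mpr ⟨Polynomial.mem_support_iff.mpr hjz, he⟩
    exact absurd (t.min'_le j this) (not_le_of_gt hj)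

include hu hc in
lemma gaussFun_mul (f g : R[X]) :
    gaussFun u c (f * g) = gaussFun u c f * gaussFun u c g := by
  by_cases hf : f = 0
  · simp [hf]
  by_cases hg : g = 0
  · simp [hg]
  set Mf := gaussFun u c f with hMf
  set Mg := gaussFun u c g with hMg
  have hMfne : Mf ≠ 0 := fun h => hf ((gaussFun_eq_zero_iff u c hu hc).mp h)
  have hMgne : Mg ≠ 0 := fun h => hg ((gaussFun_eq_zero_iff u c hu hc).mp h)
  obtain ⟨i0, hi0, hi0min⟩ := exists_min_index u c hu hc hf
  obtain ⟨j0, hj0, hj0min⟩ := exists_min_index u c hu hc hg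
  have hfi0 : u (f.coeff i0) ≠ 0 := by
    intro h; rw [h, zero_mul] at hi0; exact hMfne hi0.symm
  have hgj0 : u (g.coeff j0) ≠ 0 := by
    intro h; rw [h, zero_mul] at hj0; exact hMgne hj0.symm
  -- the key coefficient computation
  have key : u ((f * g).coeff (i0 + j0)) = u (f.coeff i0) * u (g.coeff j0) := by
    rw [Polynomial.coeff_mul]
    have hmem : ((i0, j0) : ℕ × ℕ) ∈ Finset.HasAntidiagonal.antidiagonal (i0 + j0) :=
      Finset.HasAntidiagonal.mem_antidiagonal.mpr rfl
    have h0 : u (f.coeff (i0, j0).1 * g.coeff (i0, j0).2) ≠ 0 := by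
      rw [map_mul]
      exact mul_ne_zero hfi0 hgj0
    rw [Finset.sum_eq_add_sum_sdiff_singleton_of_mem hmem fun p => f.coeff p.1 * g.coeff p.2]
    refine Eq.trans (u.map_add_eq_of_lt_left ?_) (map_mul u _ _)
    refine Valuation.map_sum_lt u h0 ?_
    intro p hp
    obtain ⟨hpa, hpne⟩ := Finset.mem_sdiff.mp hp
    have hsum : p.1 + p.2 = i0 + j0 := Finset.HasAntidiagonal.mem_antidiagonal.mp hpa
    have hks : (u (f.coeff p.1) * u (g.coeff p.2)) * c ^ (i0 + j0)
        < (u (f.coeff i0) * u (g.coeff j0)) * c ^ (i0 + j0) := by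
      have hrw1 : (u (f.coeff p.1) * u (g.coeff p.2)) * c ^ (i0 + j0)
          = (u (f.coeff p.1) * c ^ p.1) * (u (g.coeff p.2) * c ^ p.2) := by
        rw [← hsum, pow_add, mul_mul_mul_comm]
      have hrw2 : (u (f.coeff i0) * u (g.coeff j0)) * c ^ (i0 + j0)
          = (u (f.coeff i0) * c ^ i0) * (u (g.coeff j0) * c ^ j0) := by
        rw [pow_add, mul_mul_mul_comm]
      rw [hrw1, hrw2, hi0, hj0]
      have hne1 : p.1 ≠ i0 ∨ p.2 ≠ j0 := by
        by_contra hcon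
        push_neg at hcon
        exact hpne (by simp [Finset.mem_singleton, Prod.ext_iff, hcon.1, hcon.2])
      rcases lt_or_ge p.1 i0 with h1 | h1
      · -- p.1 < i0 : first factor strictly smaller
        calc u (f.coeff p.1) * c ^ p.1 * (u (g.coeff p.2) * c ^ p.2)
            ≤ u (f.coeff p.1) * c ^ p.1 * Mg :=
              mul_le_mul_right (term_le_gaussFun u c g p.2) _
          _ = Mg * (u (f.coeff p.1) * c ^ p.1) := mul_comm _ _
          _ < Mg * Mf := mul_lt_mul_of_pos_left (hi0min p.1 h1) (zero_lt_iff.mpr hMgne)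
          _ = Mf * Mg := mul_comm _ _
      · -- i0 ≤ p.1 ; then p.2 < j0 (using p ≠ (i0,j0))
        have h2 : p.2 < j0 := by
          rcases lt_or_eq_of_le h1 with h1' | h1'
          · omega
          · rcases hne1 with h | h
            · exact absurd h1'.symm h
            · omega
        calc u (f.coeff p.1) * c ^ p.1 * (u (g.coeff p.2) * c ^ p.2)
            ≤ Mf * (u (g.coeff p.2) * c ^ p.2) :=
              mul_le_mul_left (term_le_gaussFun u c f p.1) _
          _ < Mf * Mg :=
              mul_lt_mul_of_pos_left (hj0min p.2 h2) (zero_lt_iff.mpr hMfne)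
    rw [map_mul, map_mul]
    exact lt_of_mul_lt_mul_right₀' hks
  -- now prove the two inequalities
  apply le_antisymm
  · -- ≤
    apply gaussFun_le
    intro k
    rcases Finset.HasAntidiagonal.antidiagonal k |>.eq_empty_or_nonempty with he | hne
    · exact absurd he (Finset.nonempty_iff_ne_empty.mp ⟨(0, k), Finset.HasAntidiagonal.mem_antidiagonal.mpr (by simp)⟩)
    obtain ⟨p, hp, hpeq⟩ := Finset.exists_mem_eq_sup (Finset.HasAntidiagonal.antidiagonal k) hne
      fun p => u (f.coeff p.1) * u (g.coeff p.2)
    have hb : u ((f * g).coeff k) ≤ u (f.coeff p.1) * u (g.coeff p.2) := by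
      rw [Polynomial.coeff_mul]
      refine Valuation.map_sum_le u fun q hq => ?_
      rw [map_mul, ← hpeq]
      exact Finset.le_sup (f := fun p : ℕ × ℕ => u (f.coeff p.1) * u (g.coeff p.2)) hq
    calc u ((f * g).coeff k) * c ^ k
        ≤ (u (f.coeff p.1) * u (g.coeff p.2)) * c ^ k := mul_le_mul_left hb _
      _ = (u (f.coeff p.1) * c ^ p.1) * (u (g.coeff p.2) * c ^ p.2) := by
          rw [← Finset.HasAntidiagonal.mem_antidiagonal.mp hp, pow_add, mul_mul_mul_comm]
      _ ≤ Mf * Mg := mul_le_mul' (term_le_gaussFun u c f p.1) (term_le_gaussFun u c g p.2)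
  · -- ≥
    have : Mf * Mg = u ((f * g).coeff (i0 + j0)) * c ^ (i0 + j0) := by
      rw [key, hMf, hMg, ← hi0, ← hj0, pow_add, mul_mul_mul_comm]
    rw [this]
    exact term_le_gaussFun u c (f * g) (i0 + j0)

include hu hc in
lemma gaussFun_one [Nontrivial R] : gaussFun u c (1 : R[X]) = 1 := by
  have : (1 : R[X]).support = {0} := by
    rw [← Polynomial.C_1, Polynomial.support_C one_ne_zero]
  rw [gaussFun, this]
  simp

/-- The Gauss valuation on `R[X]` attached to a valuation `u` on `R` with trivial support
and a nonzero value `c` for `X`. -/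
noncomputable def gaussVal [Nontrivial R] : Valuation R[X] Γ where
  toFun := gaussFun u c
  map_zero' := gaussFun_zero u c
  map_one' := gaussFun_one u c hu hc
  map_mul' := gaussFun_mul u c hu hc
  map_add_le_max' f g := by
    apply gaussFun_le
    intro i
    rw [Polynomial.coeff_add]
    calc u (f.coeff i + g.coeff i) * c ^ i
        ≤ max (u (f.coeff i)) (u (g.coeff i)) * c ^ i :=
          mul_le_mul_left (u.map_add _ _) _
      _ = max (u (f.coeff i) * c ^ i) (u (g.coeff i) * c ^ i) :=
          (max_mul_mul_right _ _ _).symm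
      _ ≤ max (gaussFun u c f) (gaussFun u c g) :=
          max_le_max (term_le_gaussFun u c f i) (term_le_gaussFun u c g i)

variable [Nontrivial R]

lemma gaussVal_apply (f : R[X]) : gaussVal u c hu hc f = gaussFun u c f := rfl

lemma gaussVal_eq_zero_iff {f : R[X]} : gaussVal u c hu hc f = 0 ↔ f = 0 :=
  gaussFun_eq_zero_iff u c hu hc

lemma gaussVal_X_pow (k : ℕ) : gaussVal u c hu hc (X ^ k) = c ^ k := by
  rw [gaussVal_apply, gaussFun, Polynomial.support_X_pow k]
  simp

lemma gaussVal_C {a : R} (ha : a ≠ 0) : gaussVal u c hu hc (C a) = u a := by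
  rw [gaussVal_apply, gaussFun, Polynomial.support_C ha]
  simp

lemma gaussVal_le_one {f : R[X]} (h : ∀ i, u (f.coeff i) ≤ 1) (hcle : c ≤ 1) :
    gaussVal u c hu hc f ≤ 1 :=
  gaussFun_le u c fun i => mul_le_one' (h i) (pow_le_one' hcle i)

end Gauss

/-! ### Auxiliary: powers of a valuation -/

section PowVal

variable {R : Type*} [CommRing R] {Γ : Type*} [LinearOrderedCommGroupWithZero Γ]

/-- The `(n+1)`-st power of a valuation. -/
noncomputable def powVal (u : Valuation R Γ) (n : ℕ) : Valuation R Γ where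
  toFun x := u x ^ (n + 1)
  map_zero' := by simp
  map_one' := by simp
  map_mul' x y := by
    show u (x * y) ^ (n + 1) = u x ^ (n + 1) * u y ^ (n + 1)
    rw [map_mul, mul_pow]
  map_add_le_max' x y := by
    have h := u.map_add x y
    rcases le_total (u x) (u y) with hxy | hxy
    · rw [max_eq_right hxy] at h
      exact le_max_of_le_right (pow_le_pow_left' h _)
    · rw [max_eq_left hxy] at h
      exact le_max_of_le_left (pow_le_pow_left' h _)

lemma powVal_apply (u : Valuation R Γ) (n : ℕ) (x : R) : powVal u n x = u x ^ (n + 1) := rfl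

end PowVal

/-! ### Existence of a valuation subring with a prescribed nonunit -/

section Dominate

variable {D : Type*} [CommRing D] [IsDomain D]

lemma exists_valuationSubring_nonunit {d : D} (hd0 : d ≠ 0) (hdu : ¬ IsUnit d) :
    ∃ B : ValuationSubring (FractionRing D),
      (∀ a : D, algebraMap D (FractionRing D) a ∈ B) ∧
      B.valuation (algebraMap D (FractionRing D) d) < 1 := by
  classical
  set K := FractionRing D
  set θ : D →+* K := algebraMap D K with hθ
  have hinj : Function.Injective θ := IsFractionRing.injective D K
  -- a maximal ideal containing d
  obtain ⟨m, hm, hdm⟩ := Ideal.exists_le_maximal (Ideal.span {d})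
    (fun h => hdu (Ideal.span_singleton_eq_top.mp (by rw [h])))
  have hdm' : d ∈ m := hdm (Ideal.subset_span rfl)
  -- the range of θ, isomorphic to D
  set S : Subring K := θ.range with hS
  set e : D ≃+* θ.range := RingEquiv.ofLeftInverse
    (Function.leftInverse_invFun hinj) with he
  set P : Ideal S := Ideal.comap (e.symm : S →+* D) m with hP
  haveI : m.IsPrime := hm.isPrime
  haveI : P.IsPrime := Ideal.IsPrime.comap _
  obtain ⟨B, hB1, hB2⟩ := (LocalSubring.ofPrime S P).exists_le_valuationSubring
  have hSB : ∀ x : K, x ∈ S → x ∈ B := by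
    intro x hx
    exact hB1 (LocalSubring.le_ofPrime S P hx)
  have hDmem : ∀ a : D, θ a ∈ B := fun a => hSB _ ⟨a, rfl⟩
  refine ⟨B, hDmem, ?_⟩
  rw [← ValuationSubring.valuation_lt_one_iff B ⟨θ d, hDmem d⟩]
  rw [IsLocalRing.mem_maximalIdeal, mem_nonunits_iff]
  -- suppose it were a unit in B
  intro hunit
  have hθdS : θ d ∈ S := ⟨d, rfl⟩
  have hθdA : θ d ∈ (LocalSubring.ofPrime S P).toSubring := LocalSubring.le_ofPrime S P hθdS
  have hincl : (Subring.inclusion hB1) ⟨θ d, hθdA⟩ = ⟨θ d, hDmem d⟩ := rfl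
  have hAunit : IsUnit (⟨θ d, hθdA⟩ : (LocalSubring.ofPrime S P).toSubring) :=
    hB2.map_nonunit _ (hincl ▸ hunit)
  -- but θ d maps into P, contradiction
  have : IsUnit (algebraMap S (LocalSubring.ofPrime S P).toSubring ⟨θ d, hθdS⟩) := hAunit
  rw [IsLocalization.AtPrime.isUnit_to_map_iff _ P] at this
  apply this
  show e.symm ⟨θ d, hθdS⟩ ∈ m
  have : e.symm ⟨θ d, hθdS⟩ = d := by
    have : e d = ⟨θ d, hθdS⟩ := Subtype.ext rfl
    rw [← this, RingEquiv.symm_apply_apply]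
  rw [this]
  exact hdm'

end Dominate

theorem stmt11 (D : Type*) [CommRing D] [IsDomain D] (hD : ¬ IsField D) :
    ¬ TopologicalSpace.NoetherianSpace
        (zarSet (Polynomial D) (FractionRing (Polynomial D))) := by
  classical
  intro hN
  -- a nonzero nonunit d of D
  obtain ⟨I, hIbot, hItop⟩ := (Ring.not_isField_iff_exists_ideal_bot_lt_and_lt_top).mp hD
  obtain ⟨d, hdI, hd0⟩ := SetLike.exists_of_lt hIbot
  rw [Submodule.mem_bot] at hd0
  have hdu : ¬ IsUnit d := fun h => hItop.ne (Ideal.eq_top_of_isUnit_mem I hdI h)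
  -- a valuation subring of Frac D with w(d) < 1
  obtain ⟨B, hBD, hBd⟩ := exists_valuationSubring_nonunit hd0 hdu
  set K := FractionRing D
  set θK : D →+* K := algebraMap D K with hθK
  set w := B.valuation with hw
  set c : B.ValueGroup := w (θK d) with hc0
  have hcne : c ≠ 0 := by
    rw [hc0]
    refine (Valuation.ne_zero_iff w).mpr fun h => hd0 ?_
    exact (IsFractionRing.injective D K) (by rw [h, map_zero])
  have hclt : c < 1 := hBd
  have hcle : c ≤ 1 := le_of_lt hclt
  -- the coefficient valuations and the Gauss valuations
  set uD : Valuation D B.ValueGroup := w.comap θK with huD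
  have huzero : ∀ (n : ℕ) (a : D), powVal uD n a = 0 ↔ a = 0 := by
    intro n a
    rw [powVal_apply, pow_eq_zero_iff (Nat.succ_ne_zero n)]
    show w (θK a) = 0 ↔ a = 0
    rw [Valuation.zero_iff]
    constructor
    · intro h; exact (IsFractionRing.injective D K) (by rw [h, map_zero])
    · rintro rfl; exact map_zero θK
  set v : ℕ → Valuation (Polynomial D) B.ValueGroup :=
    fun n => gaussVal (powVal uD n) c (huzero n) hcne with hv
  -- extend to the fraction field of D[X]
  set L := FractionRing (Polynomial D)
  set θL : Polynomial D →+* L := algebraMap (Polynomial D) L with hθL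
  have hvsupp : ∀ n : ℕ, nonZeroDivisors (Polynomial D) ≤ (v n).supp.primeCompl := by
    intro n f hf
    show f ∉ (v n).supp
    rw [Valuation.mem_supp_iff]
    rw [show (v n) f = gaussVal (powVal uD n) c (huzero n) hcne f from rfl]
    rw [gaussVal_eq_zero_iff]
    exact nonZeroDivisors.ne_zero hf
  set ν : ℕ → Valuation L B.ValueGroup :=
    fun n => (v n).extendToLocalization (hvsupp n) L with hν
  set V : ℕ → ValuationSubring L := fun n => (ν n).valuationSubring with hV
  have hνθ : ∀ (n : ℕ) (f : Polynomial D), ν n (θL f) = v n f := fun n f =>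
    Valuation.extendToLocalization_apply_map_apply (v n) (hvsupp n) L f
  -- each V n contains the image of D[X]
  have hVzar : ∀ n : ℕ, V n ∈ zarSet (Polynomial D) L := by
    intro n f
    show ν n (θL f) ≤ 1
    rw [hνθ]
    refine gaussVal_le_one _ _ _ _ (fun i => ?_) hcle
    rw [powVal_apply]
    refine pow_le_one' ?_ _
    exact (ValuationSubring.valuation_le_one_iff B _).mpr (hBD _)
  -- the test elements x k = X^k / C d
  have hCd0 : θL (Polynomial.C d) ≠ 0 := fun h =>
    hd0 (Polynomial.C_eq_zero.mp ((map_eq_zero_iff θL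
      (IsFractionRing.injective (Polynomial D) L)).mp h))
  set x : ℕ → L := fun k => θL (Polynomial.X ^ k) / θL (Polynomial.C d) with hx
  have hxrel : ∀ k, x k * θL (Polynomial.C d) = θL (Polynomial.X ^ k) := fun k =>
    div_mul_cancel₀ _ hCd0
  have hνCd : ∀ n, ν n (θL (Polynomial.C d)) = c ^ (n + 1) := by
    intro n
    rw [hνθ]
    rw [show (v n) (Polynomial.C d) =
      gaussVal (powVal uD n) c (huzero n) hcne (Polynomial.C d) from rfl]
    rw [gaussVal_C _ _ _ _ hd0, powVal_apply]
    rfl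
  have hνX : ∀ n k, ν n (θL (Polynomial.X ^ k)) = c ^ k := by
    intro n k
    rw [hνθ]
    exact gaussVal_X_pow _ _ _ _ k
  have hνx : ∀ n k, ν n (x k) * c ^ (n + 1) = c ^ k := by
    intro n k
    rw [← hνCd n, ← map_mul, hxrel, hνX]
  -- membership criterion
  have hmem : ∀ n k : ℕ, x k ∈ V n ↔ n + 1 ≤ k := by
    intro n k
    rw [hV]
    show ν n (x k) ≤ 1 ↔ n + 1 ≤ k
    constructor
    · intro h
      by_contra hk
      push_neg at hk
      -- k ≤ n, so c^(n+1) < c^k, yet c^k ≤ c^(n+1)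
      have h1 : c ^ k ≤ c ^ (n + 1) := by
        calc c ^ k = ν n (x k) * c ^ (n + 1) := (hνx n k).symm
          _ ≤ 1 * c ^ (n + 1) := mul_le_mul_left h _
          _ = c ^ (n + 1) := one_mul _
      have h2 : c ^ (n + 1) < c ^ k := by
        have hsplit : c ^ (n + 1) = c ^ k * c ^ (n + 1 - k) := by
          rw [← pow_add]
          congr 1
          omega
        rw [hsplit]
        have hlt1 : c ^ (n + 1 - k) < 1 := pow_lt_one' hclt (by omega)
        calc c ^ k * c ^ (n + 1 - k) < c ^ k * 1 :=
            mul_lt_mul_of_pos_left hlt1 (zero_lt_iff.mpr (pow_ne_zero _ hcne))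
          _ = c ^ k := mul_one _
      exact absurd (lt_of_le_of_lt h1 h2) (lt_irrefl _)
    · intro hk
      have : ν n (x k) = c ^ (k - (n + 1)) := by
        refine mul_right_cancel₀ (pow_ne_zero (n + 1) hcne) ?_
        rw [hνx, ← pow_add]
        congr 1
        omega
      rw [this]
      exact pow_le_one' hcle _
  -- the compactness argument
  set Z := zarSet (Polynomial D) L
  set Vz : ℕ → Z := fun n => ⟨V n, hVzar n⟩ with hVz
  set s : Set Z := Set.range Vz with hs
  set O : ℕ → Set Z := fun k => Subtype.val ⁻¹' {W : ValuationSubring L | x k ∈ W} with hO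
  have hOopen : ∀ k, IsOpen (O k) := by
    intro k
    refine IsOpen.preimage continuous_subtype_val ?_
    exact TopologicalSpace.isOpen_generateFrom_of_mem ⟨x k, rfl⟩
  have hcov : s ⊆ ⋃ k, O k := by
    rintro _ ⟨n, rfl⟩
    exact Set.mem_iUnion.mpr ⟨n + 1, (hmem n (n + 1)).mpr le_rfl⟩
  obtain ⟨t, ht⟩ := (TopologicalSpace.NoetherianSpace.isCompact s).elim_finite_subcover
    O hOopen hcov
  set n := t.sup id with hn
  have hVn : Vz n ∈ s := ⟨n, rfl⟩
  obtain ⟨k, hkt, hkx⟩ := Set.mem_iUnion₂.mp (ht hVn)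
  have h1 : n + 1 ≤ k := (hmem n k).mp hkx
  have h2 : k ≤ n := Finset.le_sup (f := id) hkt
  omega
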